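/- Suppose u, x, z are rational numbers, all with v_3 equal to the same integer k < 0, and u^4 - (z^2 + 4x^2 + 1)u^2 + z^2 = 0. Then a contradiction follows; i.e., there is no such solution. -/

import Mathlib

lemma aux_unit (q : ℚ) (hq : q ≠ 0) (hv : padicValRat 3 q = 0) :
    ‖((q : ℚ_[3]))‖ = 1 := by
  rw [Padic.eq_padicNorm, padicNorm.eq_zpow_of_nonzero hq, hv]
  norm_num

theorem no_equal_negative_valuation (u x z : ℚ) (k : ℤ) (hk : k < 0)
    (hu : padicValRat 3 u = k) (hx : padicValRat 3 x = k) (hz : padicValRat 3 z = k)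
    (h : u ^ 4 - (z ^ 2 + 4 * x ^ 2 + 1) * u ^ 2 + z ^ 2 = 0) :
    False := by
  have hu0 : u ≠ 0 := by rintro rfl; rw [padicValRat.zero] at hu; omega
  have hx0 : x ≠ 0 := by rintro rfl; rw [padicValRat.zero] at hx; omega
  have hz0 : z ≠ 0 := by rintro rfl; rw [padicValRat.zero] at hz; omega
  set n : ℕ := (-k).toNat with hn
  have hnk : (n : ℤ) = -k := Int.toNat_of_nonneg (by omega)
  have hn1 : 1 ≤ n := by omega
  have h3 : (3 : ℚ) ≠ 0 := by norm_num
  have hval3 : padicValRat 3 ((3:ℚ)^n) = n := by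
    rw [show (3:ℚ) = ((3:ℕ):ℚ) by norm_cast, padicValRat.pow,
      padicValRat.self (by norm_num)]; ring
  have key : ∀ q : ℚ, q ≠ 0 → padicValRat 3 q = k →
      padicValRat 3 ((3:ℚ)^n * q) = 0 := by
    intro q hq hvq
    rw [padicValRat.mul (pow_ne_zero _ h3) hq, hval3, hvq]; omega
  -- scaled variables
  set U : ℚ := (3:ℚ)^n * u
  set X : ℚ := (3:ℚ)^n * x
  set Z : ℚ := (3:ℚ)^n * z
  have hU0 : U ≠ 0 := mul_ne_zero (pow_ne_zero _ h3) hu0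
  have hX0 : X ≠ 0 := mul_ne_zero (pow_ne_zero _ h3) hx0
  have hZ0 : Z ≠ 0 := mul_ne_zero (pow_ne_zero _ h3) hz0
  have hUn : ‖((U : ℚ_[3]))‖ = 1 := aux_unit U hU0 (key u hu0 hu)
  have hXn : ‖((X : ℚ_[3]))‖ = 1 := aux_unit X hX0 (key x hx0 hx)
  have hZn : ‖((Z : ℚ_[3]))‖ = 1 := aux_unit Z hZ0 (key z hz0 hz)
  -- integer elements
  let Ui : ℤ_[3] := ⟨(U : ℚ_[3]), le_of_eq hUn⟩
  let Xi : ℤ_[3] := ⟨(X : ℚ_[3]), le_of_eq hXn⟩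
  let Zi : ℤ_[3] := ⟨(Z : ℚ_[3]), le_of_eq hZn⟩
  -- scaled equation
  have heqQ : U ^ 4 - (Z ^ 2 + 4 * X ^ 2) * U ^ 2
      - (3:ℚ)^(2*n) * U ^ 2 + (3:ℚ)^(2*n) * Z ^ 2 = 0 := by
    have := congrArg (fun t => (3:ℚ)^(4*n) * t) h
    simp only [mul_zero] at this
    calc U ^ 4 - (Z ^ 2 + 4 * X ^ 2) * U ^ 2 - (3:ℚ)^(2*n) * U ^ 2 + (3:ℚ)^(2*n) * Z ^ 2
        = (3:ℚ)^(4*n) * (u ^ 4 - (z ^ 2 + 4 * x ^ 2 + 1) * u ^ 2 + z ^ 2) := by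
          simp only [U, X, Z]; ring
      _ = 0 := this
  have heqP : (Ui ^ 4 - (Zi ^ 2 + 4 * Xi ^ 2) * Ui ^ 2
      - (3:ℤ_[3])^(2*n) * Ui ^ 2 + (3:ℤ_[3])^(2*n) * Zi ^ 2 : ℤ_[3]) = 0 := by
    have heqC : ((U:ℚ_[3]))^4 - ((Z:ℚ_[3])^2 + 4*(X:ℚ_[3])^2)*(U:ℚ_[3])^2
        - (3:ℚ_[3])^(2*n)*(U:ℚ_[3])^2 + (3:ℚ_[3])^(2*n)*(Z:ℚ_[3])^2 = 0 := by
      exact_mod_cast congrArg (fun t : ℚ => (t : ℚ_[3])) heqQ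
    apply Subtype.ext
    push_cast
    exact heqC
  -- map to ZMod 3
  have hmap := congrArg (PadicInt.toZMod : ℤ_[3] →+* ZMod 3) heqP
  simp only [map_add, map_sub, map_mul, map_pow, map_ofNat, map_zero] at hmap
  have h3z : (3 : ZMod 3) = 0 := by decide
  rw [h3z] at hmap
  have hzero : (0 : ZMod 3) ^ (2*n) = 0 := by
    apply zero_pow; omega
  rw [hzero] at hmap
  have hUne : PadicInt.toZMod Ui ≠ 0 := by
    have : IsUnit Ui := PadicInt.isUnit_iff.mpr hUn
    exact (this.map PadicInt.toZMod).ne_zero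
  have hXne : PadicInt.toZMod Xi ≠ 0 := by
    have : IsUnit Xi := PadicInt.isUnit_iff.mpr hXn
    exact (this.map PadicInt.toZMod).ne_zero
  have hZne : PadicInt.toZMod Zi ≠ 0 := by
    have : IsUnit Zi := PadicInt.isUnit_iff.mpr hZn
    exact (this.map PadicInt.toZMod).ne_zero
  set a := PadicInt.toZMod Ui
  set b := PadicInt.toZMod Xi
  set c := PadicInt.toZMod Zi
  revert hmap
  have : ∀ a b c : ZMod 3, a ≠ 0 → b ≠ 0 → c ≠ 0 →
      a ^ 4 - (c ^ 2 + 4 * b ^ 2) * a ^ 2 - 0 * a ^ 2 + 0 * c ^ 2 ≠ 0 := by decide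
  exact this a b c hUne hXne hZne
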